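/- arXiv:2502.17203 — 4 statements merged into one kernel-verified Lean document; each statement's English description precedes it below -/
import Mathlib

section
/- Let H be a real inner product space, u ∈ H, and let V ⊆ V' be complete subspaces of H. Let u₁ be the orthogonal projection of u onto V, u₂ the orthogonal projection of u onto V', and set v = u₂ − u₁. Suppose 0 < τ < 1 and there exists ψ ∈ V' with ‖(u − u₁) − ψ‖ ≤ τ·‖u − u₁‖. Then (1/(1+τ))·‖v‖ ≤ ‖u − u₁‖ ≤ (1/(1−τ))·‖v‖. (Paper's a posteriori error estimate proposition: the stage improvement ‖v‖ is a reliable error indicator.) -/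
/-- A posteriori error estimate: the stage improvement ‖v‖ is a reliable
error indicator up to factors 1/(1+τ) and 1/(1−τ). -/
theorem a_posteriori_estimate {H : Type*} [NormedAddCommGroup H] [InnerProductSpace ℝ H]
    (u : H) (V V' : Submodule ℝ H) [CompleteSpace V] [CompleteSpace V']
    (hVV' : V ≤ V') (u₁ u₂ v : H)
    (hu₁ : u₁ = (Submodule.orthogonalProjectionOnto V u : H))
    (hu₂ : u₂ = (Submodule.orthogonalProjectionOnto V' u : H))
    (hv : v = u₂ - u₁)
    (τ : ℝ) (hτ0 : 0 < τ) (hτ1 : τ < 1)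
    (hψ : ∃ ψ ∈ V', ‖(u - u₁) - ψ‖ ≤ τ * ‖u - u₁‖) :
    (1 / (1 + τ)) * ‖v‖ ≤ ‖u - u₁‖ ∧ ‖u - u₁‖ ≤ (1 / (1 - τ)) * ‖v‖ := by
  obtain ⟨ψ, hψV', hψle⟩ := hψ
  -- u₁ + ψ ∈ V'
  have hu₁V : u₁ ∈ V := hu₁ ▸ (Submodule.orthogonalProjectionOnto V u).2
  have hmem : u₁ + ψ ∈ V' := V'.add_mem (hVV' hu₁V) hψV'
  have hkey : ‖u - u₂‖ ≤ τ * ‖u - u₁‖ := by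
    have hmin : ‖u - u₂‖ ≤ ‖u - (u₁ + ψ)‖ := by
      rw [hu₂, ← Submodule.starProjection_apply, Submodule.starProjection_minimal]
      exact ciInf_le ⟨0, by rintro x ⟨y, rfl⟩; positivity⟩ (⟨u₁ + ψ, hmem⟩ : V')
    calc ‖u - u₂‖ ≤ ‖u - (u₁ + ψ)‖ := hmin
      _ = ‖(u - u₁) - ψ‖ := by rw [sub_add_eq_sub_sub]
      _ ≤ τ * ‖u - u₁‖ := hψle
  have hvw : u - u₂ = (u - u₁) - v := by rw [hv]; abel
  constructor
  · have h1 : ‖v‖ ≤ (1 + τ) * ‖u - u₁‖ := by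
      calc ‖v‖ = ‖(u - u₁) - (u - u₂)‖ := by rw [hvw]; congr 1; abel
        _ ≤ ‖u - u₁‖ + ‖u - u₂‖ := norm_sub_le _ _
        _ ≤ ‖u - u₁‖ + τ * ‖u - u₁‖ := by linarith
        _ = (1 + τ) * ‖u - u₁‖ := by ring
    rw [div_mul_eq_mul_div, div_le_iff₀ (by linarith)]
    linarith
  · have h2 : ‖u - u₁‖ ≤ ‖v‖ + τ * ‖u - u₁‖ := by
      calc ‖u - u₁‖ = ‖v + (u - u₂)‖ := by rw [hvw]; congr 1; abel
        _ ≤ ‖v‖ + ‖u - u₂‖ := norm_add_le _ _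
        _ ≤ ‖v‖ + τ * ‖u - u₁‖ := by linarith
    rw [div_mul_eq_mul_div, le_div_iff₀ (by linarith)]
    linarith
end

section
/- Let H be a real inner product space, u ∈ H, and let V ⊆ V' be complete subspaces of H. Let u₁ be the orthogonal projection of u onto V, u₂ the orthogonal projection of u onto V', and set v = u₂ − u₁. If τ > 0 and there exists ψ ∈ V' with ‖(u − u₁) − ψ‖ ≤ τ·‖u − u₁‖, then | ‖u − u₁‖ − ‖v‖ | ≤ τ·‖u − u₁‖. (Intermediate estimate in the proof of the paper's a posteriori error proposition.) -/
/-- Intermediate estimate in the a posteriori proof: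
| ‖u − u₁‖ − ‖v‖ | ≤ τ·‖u − u₁‖. -/
theorem a_posteriori_intermediate {H : Type*} [NormedAddCommGroup H]
    [InnerProductSpace ℝ H]
    (u : H) (V V' : Submodule ℝ H) [CompleteSpace V] [CompleteSpace V']
    (hVV' : V ≤ V') (u₁ u₂ v : H)
    (hu₁ : u₁ = (V.orthogonalProjectionOnto u : H))
    (hu₂ : u₂ = (V'.orthogonalProjectionOnto u : H))
    (hv : v = u₂ - u₁)
    (τ : ℝ) (hτ : 0 < τ)
    (hψ : ∃ ψ ∈ V', ‖(u - u₁) - ψ‖ ≤ τ * ‖u - u₁‖) :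
    |‖u - u₁‖ - ‖v‖| ≤ τ * ‖u - u₁‖ := by
  obtain ⟨ψ, hψV', hψle⟩ := hψ
  have hu₁V' : u₁ ∈ V' := hVV' (hu₁ ▸ (V.orthogonalProjectionOnto u).2)
  have hvV' : v ∈ V' := by
    rw [hv, hu₂]; exact V'.sub_mem (V'.orthogonalProjectionOnto u).2 hu₁V'
  -- ‖u - u₂‖ ≤ ‖u - (u₁ + ψ)‖ ≤ τ‖u - u₁‖
  have h1 : ‖u - u₂‖ ≤ τ * ‖u - u₁‖ := by
    have := Submodule.starProjection_minimal (U := V') u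
    rw [Submodule.starProjection_apply] at this
    have hle : ‖u - (V'.orthogonalProjectionOnto u : H)‖ ≤ ‖u - (u₁ + ψ)‖ := by
      rw [this]
      exact ciInf_le ⟨0, by rintro x ⟨y, rfl⟩; positivity⟩
        (⟨u₁ + ψ, V'.add_mem hu₁V' hψV'⟩ : V')
    rw [hu₂]
    calc ‖u - (V'.orthogonalProjectionOnto u : H)‖ ≤ ‖u - (u₁ + ψ)‖ := hle
      _ = ‖(u - u₁) - ψ‖ := by rw [sub_add_eq_sub_sub]
      _ ≤ τ * ‖u - u₁‖ := hψle
  -- Pythagoras: ‖v‖ ≤ ‖u - u₁‖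
  have horth : inner ℝ (u - u₂) v = (0:ℝ) := by
    rw [hu₂]; exact Submodule.starProjection_inner_eq_zero (K := V') u v hvV'
  have hpyth : ‖u - u₁‖ ^ 2 = ‖u - u₂‖ ^ 2 + ‖v‖ ^ 2 := by
    have : u - u₁ = (u - u₂) + v := by rw [hv]; abel
    rw [this, ← real_inner_self_eq_norm_sq, ← real_inner_self_eq_norm_sq,
      ← real_inner_self_eq_norm_sq, inner_add_add_self, horth]
    have horth2 : inner ℝ v (u - u₂) = (0:ℝ) := by rw [real_inner_comm]; exact horth
    rw [horth2]; ring
  have hvle : ‖v‖ ≤ ‖u - u₁‖ := by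
    have h2 : ‖v‖ ^ 2 ≤ ‖u - u₁‖ ^ 2 := by nlinarith [sq_nonneg ‖u - u₂‖]
    nlinarith [norm_nonneg v, norm_nonneg (u - u₁)]
  have hτn : 0 ≤ τ * ‖u - u₁‖ := by positivity
  rw [abs_le]
  constructor
  · nlinarith
  · have : ‖u - u₁‖ ≤ ‖u - u₂‖ + ‖v‖ := by
      calc ‖u - u₁‖ = ‖(u - u₂) + v‖ := by rw [hv]; congr 1; abel
        _ ≤ ‖u - u₂‖ + ‖v‖ := norm_add_le _ _
    linarith
end

section
/- Let H be a real inner product space, u ∈ H, and let V ⊆ V' be complete subspaces of H. Let u₁ be the orthogonal projection of u onto V and u₂ the orthogonal projection of u onto V'. Suppose 0 < τ, u ≠ u₁, and there exists a nonzero ψ ∈ V' with ‖(u − u₁) − ψ‖ ≤ τ·‖u − u₁‖. Then ‖u − u₂‖ ≤ 2τ·‖u − u₁‖. (Single-stage error reduction estimate (3.6) in the proof of the paper's geometric convergence proposition, obtained by comparing u₂ with the competitor u₁ + (‖u − u₁‖/‖ψ‖)·ψ ∈ V'.) -/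
/-- Single-stage error reduction estimate (3.6): under a relative network
approximation assumption, the projected error drops by a factor 2τ. -/
theorem single_stage_reduction {H : Type*} [NormedAddCommGroup H]
    [InnerProductSpace ℝ H]
    (u : H) (V V' : Submodule ℝ H) [CompleteSpace V] [CompleteSpace V']
    (hVV' : V ≤ V') (u₁ u₂ : H)
    (hu₁ : u₁ = (V.orthogonalProjection u : H))
    (hu₂ : u₂ = (V'.orthogonalProjection u : H))
    (τ : ℝ) (hτ : 0 < τ) (hu : u ≠ u₁)
    (hψ : ∃ ψ ∈ V', ψ ≠ 0 ∧ ‖(u - u₁) - ψ‖ ≤ τ * ‖u - u₁‖) :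
    ‖u - u₂‖ ≤ 2 * τ * ‖u - u₁‖ := by
  obtain ⟨ψ, hψV', hψ0, hψle⟩ := hψ
  have hu₁V' : u₁ ∈ V' := hVV' (hu₁ ▸ (V.orthogonalProjection u).2)
  set c : ℝ := ‖u - u₁‖ / ‖ψ‖ with hc
  have hψn : (0:ℝ) < ‖ψ‖ := norm_pos_iff.mpr hψ0
  have hv : u₁ + c • ψ ∈ V' := V'.add_mem hu₁V' (V'.smul_mem c hψV')
  -- best approximation property
  have hbest : ‖u - u₂‖ ≤ ‖u - (u₁ + c • ψ)‖ := by
    rw [hu₂, show ‖u - (V'.orthogonalProjection u : H)‖ = ⨅ x : V', ‖u - x‖ from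
      Submodule.starProjection_minimal u]
    exact ciInf_le ⟨0, fun x ⟨y, hy⟩ => hy ▸ norm_nonneg _⟩ (⟨_, hv⟩ : V')
  have key : ‖u - (u₁ + c • ψ)‖ ≤ 2 * τ * ‖u - u₁‖ := by
    have h1 : u - (u₁ + c • ψ) = ((u - u₁) - ψ) + (1 - c) • ψ := by
      rw [sub_smul, one_smul]; abel
    have h2 : ‖(1 - c) • ψ‖ = |‖ψ‖ - ‖u - u₁‖| := by
      rw [norm_smul, Real.norm_eq_abs]
      rw [show (1 - c) = (‖ψ‖ - ‖u - u₁‖) / ‖ψ‖ by rw [hc]; field_simp [hψn.ne']]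
      rw [abs_div, abs_of_pos hψn, div_mul_cancel₀ _ hψn.ne']
    have h3 : |‖ψ‖ - ‖u - u₁‖| ≤ ‖ψ - (u - u₁)‖ := abs_norm_sub_norm_le _ _
    calc ‖u - (u₁ + c • ψ)‖ ≤ ‖(u - u₁) - ψ‖ + ‖(1 - c) • ψ‖ := by
          rw [h1]; exact norm_add_le _ _
      _ ≤ τ * ‖u - u₁‖ + τ * ‖u - u₁‖ := by
          refine add_le_add hψle ?_
          rw [h2]
          exact h3.trans (by rwa [norm_sub_rev] at hψle)
      _ = 2 * τ * ‖u - u₁‖ := by ring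
  exact hbest.trans key
end

section
/- Let H be a real inner product space, u ∈ H, S ≥ 1 a natural number, and let V₀ ⊆ V₁ ⊆ ⋯ ⊆ V_S be an increasing chain of complete subspaces of H. For each s, let u_s* be the orthogonal projection of u onto V_s, and let τ₁, …, τ_S be positive reals. Suppose that for every s with 1 ≤ s ≤ S, either u = u_{s−1}* or there exists a nonzero ψ_s ∈ V_s with ‖(u − u_{s−1}*) − ψ_s‖ ≤ τ_s·‖u − u_{s−1}*‖. Then ‖u − u_S*‖ ≤ ‖u − u₀*‖ · ∏_{s=1}^{S} min{1, 2τ_s}. (Paper's geometric convergence proposition: under per-stage relative approximation assumptions, the algorithm's error satisfies a multiplicative reduction bound, giving geometric convergence when τ_s = τ < 1/2 for all s.) -/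
/-- Minimality of orthogonal projection as an inequality. -/
lemma proj_min {H : Type*} [NormedAddCommGroup H] [InnerProductSpace ℝ H]
    (K : Submodule ℝ H) [CompleteSpace K] (u v : H) (hv : v ∈ K) :
    ‖u - (K.orthogonalProjection u : H)‖ ≤ ‖u - v‖ := by
  rw [← Submodule.starProjection_apply, Submodule.starProjection_minimal]
  exact ciInf_le ⟨0, by rintro x ⟨y, rfl⟩; positivity⟩ (⟨v, hv⟩ : K)

/-- Geometric convergence proposition: under per-stage relative approximation
assumptions, the error satisfies the multiplicative reduction bound
‖u − u_S*‖ ≤ ‖u − u₀*‖ · ∏_{s=1}^{S} min{1, 2τ_s}. -/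
theorem geometric_convergence {H : Type*} [NormedAddCommGroup H]
    [InnerProductSpace ℝ H]
    (u : H) (S : ℕ) (hS : 1 ≤ S)
    (V : ℕ → Submodule ℝ H) [∀ s, CompleteSpace (V s)]
    (hchain : ∀ s, s < S → V s ≤ V (s + 1))
    (ustar : ℕ → H)
    (hustar : ∀ s, ustar s = ((V s).orthogonalProjection u : H))
    (τ : ℕ → ℝ) (hτ : ∀ s, 1 ≤ s → s ≤ S → 0 < τ s)
    (happrox : ∀ s, 1 ≤ s → s ≤ S →
      u = ustar (s - 1) ∨
        ∃ ψ ∈ V s, ψ ≠ 0 ∧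
          ‖(u - ustar (s - 1)) - ψ‖ ≤ τ s * ‖u - ustar (s - 1)‖) :
    ‖u - ustar S‖ ≤ ‖u - ustar 0‖ * ∏ s ∈ Finset.Icc 1 S, min 1 (2 * τ s) := by
  -- per-stage bound
  have step : ∀ s, 1 ≤ s → s ≤ S →
      ‖u - ustar s‖ ≤ min 1 (2 * τ s) * ‖u - ustar (s - 1)‖ := by
    intro s h1 h2
    have hle : V (s - 1) ≤ V s := by
      have := hchain (s - 1) (by omega)
      rwa [Nat.sub_add_cancel h1] at this
    have hmem : ustar (s - 1) ∈ V s := by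
      rw [hustar]; exact hle ((V (s-1)).orthogonalProjection u).2
    have h1bound : ‖u - ustar s‖ ≤ ‖u - ustar (s - 1)‖ := by
      rw [hustar s]; exact proj_min _ _ _ hmem
    rcases happrox s h1 h2 with heq | ⟨ψ, hψV, _, hψ⟩
    · rw [← heq, sub_self, norm_zero] at h1bound ⊢
      exact h1bound.trans_eq (mul_zero _).symm
    · rcases le_total 1 (2 * τ s) with h | h
      · rw [min_eq_left h, one_mul]; exact h1bound
      · rw [min_eq_right h]
        have h2bound : ‖u - ustar s‖ ≤ τ s * ‖u - ustar (s - 1)‖ := by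
          have : ‖u - (ustar (s-1) + ψ)‖ ≤ τ s * ‖u - ustar (s - 1)‖ := by
            rw [← sub_sub]; exact hψ
          rw [hustar s]
          exact le_trans (proj_min _ _ _ (Submodule.add_mem _ hmem hψV)) this
        have hτpos := hτ s h1 h2
        nlinarith [norm_nonneg (u - ustar (s-1))]
  -- induction
  have main : ∀ n, n ≤ S →
      ‖u - ustar n‖ ≤ ‖u - ustar 0‖ * ∏ s ∈ Finset.Icc 1 n, min 1 (2 * τ s) := by
    intro n
    induction n with
    | zero => intro _; simp
    | succ n ih =>
      intro hn
      have ihn := ih (by omega)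
      rw [Finset.prod_Icc_succ_top (by omega)]
      have hstep := step (n+1) (by omega) hn
      simp only [Nat.add_sub_cancel] at hstep
      have hmin : (0:ℝ) ≤ min 1 (2 * τ (n+1)) :=
        le_min zero_le_one (by linarith [hτ (n+1) (by omega) hn])
      calc ‖u - ustar (n+1)‖ ≤ min 1 (2 * τ (n+1)) * ‖u - ustar n‖ := hstep
        _ ≤ min 1 (2 * τ (n+1)) * (‖u - ustar 0‖ * ∏ s ∈ Finset.Icc 1 n, min 1 (2 * τ s)) :=
            mul_le_mul_of_nonneg_left ihn hmin
        _ = ‖u - ustar 0‖ * ((∏ s ∈ Finset.Icc 1 n, min 1 (2 * τ s)) * min 1 (2 * τ (n+1))) := by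
            ring
  exact main S le_rfl
end
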